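/- Let R be a commutative ring and M an Artinian R-module. Then the following are equivalent: (i) Ann_R(0 :_M p) = p for every prime ideal p ∈ V(Ann_R M); (ii) Cos_R(0 :_M I) = Cos_R M ∩ V(I) for every ideal I of R. -/

import Mathlib

open CategoryTheory

universe u

noncomputable section

variable (R : Type u) [CommRing R]

/-- The co-support of a module `M`: the set of primes `p` of `R` such that the
co-localization `Hom_R(R_p, M)` is nonzero. -/
def cosupport (M : Type u) [AddCommGroup M] [Module R M] : Set (PrimeSpectrum R) :=
  { p | ∃ f : Localization.AtPrime p.asIdeal →ₗ[R] M, f ≠ 0 }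

/-- A saturated subset of `Spec R`: if `p ∈ X` then `V(p) ⊆ X`.
(The empty set vacuously satisfies this.) -/
def IsSaturatedSet (X : Set (PrimeSpectrum R)) : Prop :=
  ∀ p ∈ X, ∀ q : PrimeSpectrum R, p.asIdeal ≤ q.asIdeal → q ∈ X

/-- The `S`-module structure on the co-localization `Hom_R(S, M)`, given by
multiplication in the domain: `(s • f) t = f (s * t)`. -/
instance colocModule (S : Type u) [CommRing S] [Algebra R S]
    (M : Type u) [AddCommGroup M] [Module R M] : Module S (S →ₗ[R] M) where
  smul s f := f.comp (LinearMap.mulLeft R s)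
  one_smul f := by ext x; show f (1 * x) = f x; rw [one_mul]
  mul_smul s t f := by ext x; show f ((s * t) * x) = f (t * (s * x)); rw [mul_assoc, mul_left_comm]
  smul_zero s := by ext x; show (0 : S →ₗ[R] M) (s * x) = (0 : S →ₗ[R] M) x; simp
  smul_add s f g := by ext x; show (f + g) (s * x) = f (s * x) + g (s * x); simp
  add_smul s t f := by ext x; show f ((s + t) * x) = f (s * x) + f (t * x); rw [add_mul, map_add]
  zero_smul f := by ext x; show f (0 * x) = (0 : S →ₗ[R] M) x; simp

/-- `Tor_n^A(N, M)` as an object of `ModuleCat A`. -/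
def TorMod (A : Type u) [CommRing A] (n : ℕ) (N M : Type u)
    [AddCommGroup N] [Module A N] [AddCommGroup M] [Module A M] : ModuleCat A :=
  ((Tor (ModuleCat.{u} A) n).obj (ModuleCat.of A N)).obj (ModuleCat.of A M)

/-- The residue field `k(p) = R_p / p R_p`. -/
def ResField (p : Ideal R) [p.IsPrime] : Type u :=
  Localization.AtPrime p ⧸ (p.map (algebraMap R (Localization.AtPrime p)))

instance (p : Ideal R) [p.IsPrime] : AddCommGroup (ResField R p) :=
  inferInstanceAs (AddCommGroup
    (Localization.AtPrime p ⧸ (p.map (algebraMap R (Localization.AtPrime p)))))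

instance (p : Ideal R) [p.IsPrime] : Module (Localization.AtPrime p) (ResField R p) :=
  inferInstanceAs (Module (Localization.AtPrime p)
    (Localization.AtPrime p ⧸ (p.map (algebraMap R (Localization.AtPrime p)))))

/-- The `i`-th dual Bass number of `M` at `p` is positive, i.e.
`π_i(p, M) = dim_{k(p)} Tor_i^{R_p}(k(p), Hom_R(R_p, M)) > 0`. -/
def DualBassPos (p : Ideal R) [p.IsPrime] (M : Type u) [AddCommGroup M] [Module R M]
    (i : ℕ) : Prop :=
  Nontrivial (TorMod (Localization.AtPrime p) i (ResField R p)
    (Localization.AtPrime p →ₗ[R] M))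

/-- `Cograde_{R_p}(I, Hom_R(R_p, M)) = inf { i | Tor_i^{R_p}(R_p/I, Hom_R(R_p, M)) ≠ 0 }`. -/
def cogradeLoc (p : Ideal R) [p.IsPrime] (I : Ideal (Localization.AtPrime p))
    (M : Type u) [AddCommGroup M] [Module R M] : ℕ∞ :=
  sInf { n : ℕ∞ | ∃ i : ℕ, n = i ∧
    Nontrivial (TorMod (Localization.AtPrime p) i (Localization.AtPrime p ⧸ I)
      (Localization.AtPrime p →ₗ[R] M)) }

/-- `Cograde_{R_p} Hom_R(R_p, M)`, the cograde with respect to `p R_p`. -/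
def cogradeP (p : Ideal R) [p.IsPrime] (M : Type u) [AddCommGroup M] [Module R M] : ℕ∞ :=
  cogradeLoc R p (p.map (algebraMap R (Localization.AtPrime p))) M

/-- `Cograde_X(I, M) = inf { i | Cos_R(Tor_i^R(R/I, M)) ⊄ X }`. -/
def cogradeX (X : Set (PrimeSpectrum R)) (I : Ideal R)
    (M : Type u) [AddCommGroup M] [Module R M] : ℕ∞ :=
  sInf { n : ℕ∞ | ∃ i : ℕ, n = i ∧ ¬ (cosupport R (TorMod R i (R ⧸ I) M) ⊆ X) }

/-- The flat dimension of an `A`-module `M`: the least `n` such that `Tor_i^A(N, M) = 0`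
for all `i > n` and all `A`-modules `N` (and `∞` if there is no such `n`). -/
def flatDim (A : Type u) [CommRing A] (M : Type u) [AddCommGroup M] [Module A M] : ℕ∞ :=
  sInf { n : ℕ∞ | ∀ i : ℕ, n < (i : ℕ∞) →
    ∀ (N : Type u) (_ : AddCommGroup N) (_ : Module A N), Subsingleton (TorMod A i N M) }

/-- `x` is an `M`-filter co-regular sequence with respect to `X`:
for each `i`, `Cos_R((0 :_M (x_0,…,x_{i-1})) / x_i (0 :_M (x_0,…,x_{i-1}))) ⊆ X`. -/
def IsFilterCoregSeq (X : Set (PrimeSpectrum R)) (M : Type u) [AddCommGroup M] [Module R M]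
    {n : ℕ} (x : Fin n → R) : Prop :=
  ∀ i : Fin n,
    cosupport R
      ((Submodule.torsionBySet R M (x '' { j | j < i })) ⧸
        (Ideal.span {x i} •
          (⊤ : Submodule R (Submodule.torsionBySet R M (x '' { j | j < i }))))) ⊆ X

/-- `y` is an `N`-quasi co-regular sequence: multiplication by `y i` is a surjective
endomorphism of `(0 :_N (y_0,…,y_{i-1}))` for each `i`. -/
def IsQuasiCoregSeq (S : Type u) [CommRing S] (N : Type u) [AddCommGroup N] [Module S N]
    {n : ℕ} (y : Fin n → S) : Prop :=
  ∀ i : Fin n, ∀ m ∈ Submodule.torsionBySet S N (y '' { j | j < i }),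
    ∃ m' ∈ Submodule.torsionBySet S N (y '' { j | j < i }), y i • m' = m

/-- A submodule `N` of `M` is `p`-secondary: `N ≠ 0`, every `x : R` acts on `N` either
surjectively or nilpotently, and `p = √(Ann_R N)`. -/
def IsSecondary (p : Ideal R) {M : Type u} [AddCommGroup M] [Module R M]
    (N : Submodule R M) : Prop :=
  N ≠ ⊥ ∧
  (∀ x : R, (∀ m ∈ N, ∃ m' ∈ N, x • m' = m) ∨ (∃ k : ℕ, ∀ m ∈ N, x ^ k • m = 0)) ∧
  p = N.annihilator.radical

/-- The attached primes of `M`: primes occurring in a minimal secondary representation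
`M = N_1 + ⋯ + N_k` (the `N_i` being `q_i`-secondary with distinct `q_i`, no `N_i`
redundant). -/
def attachedPrimes (M : Type u) [AddCommGroup M] [Module R M] : Set (PrimeSpectrum R) :=
  { p | ∃ (k : ℕ) (N : Fin k → Submodule R M) (q : Fin k → Ideal R),
      (⨆ i, N i) = ⊤ ∧ (∀ i, IsSecondary R (q i) (N i)) ∧ Function.Injective q ∧
      (∀ i : Fin k, (⨆ j ∈ { j | j ≠ i }, N j) ≠ ⊤) ∧ (∃ i, q i = p.asIdeal) }

/-- `Co-dim_{R_p} Hom_R(R_p, M) = sup { dim R_p/(q R_p) | q ∈ Cos_R M, q ⊆ p }`. -/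
def colocCodim (p : Ideal R) [p.IsPrime] (M : Type u) [AddCommGroup M] [Module R M] :
    WithBot ℕ∞ :=
  sSup { d | ∃ q ∈ cosupport R M, q.asIdeal ≤ p ∧
    d = ringKrullDim ((Localization.AtPrime p) ⧸
      (q.asIdeal.map (algebraMap R (Localization.AtPrime p)))) }

/-- `Co-dim_R M = sup { dim R/p | p ∈ Cos_R M }`. -/
def coDim (M : Type u) [AddCommGroup M] [Module R M] : WithBot ℕ∞ :=
  sSup { d | ∃ p ∈ cosupport R M, d = ringKrullDim (R ⧸ p.asIdeal) }

/-- A `U` ring: a Noetherian commutative ring such that for every Artinian module `M`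
and every prime `p ⊇ Ann_R M`, one has `Ann_R(0 :_M p) = p`. -/
def IsURing : Prop :=
  IsNoetherianRing R ∧
  ∀ (M : Type u) (_ : AddCommGroup M) (_ : Module R M), IsArtinian R M →
    ∀ p : Ideal R, p.IsPrime → (⊤ : Submodule R M).annihilator ≤ p →
      (Submodule.torsionBySet R M (p : Set R)).annihilator = p

/-- `ht(p/q)`: the supremum of lengths of chains of primes from `q` up to `p`. -/
def relHeight (q p : Ideal R) : ℕ∞ :=
  sSup { n : ℕ∞ | ∃ m : ℕ, n = m ∧ ∃ c : Fin (m + 1) → PrimeSpectrum R,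
    StrictMono c ∧ (c 0).asIdeal = q ∧ (c (Fin.last m)).asIdeal = p }

/-- `M` is a cotorsion module: `Ext^1_R(F, M) = 0` for every flat module `F`. -/
def IsCotorsion (M : Type u) [AddCommGroup M] [Module R M] : Prop :=
  ∀ (G : Type u) (_ : AddCommGroup G) (_ : Module R G), Module.Flat R G →
    Subsingleton (((Ext R (ModuleCat.{u} R) 1).obj
      (Opposite.op (ModuleCat.of R G))).obj (ModuleCat.of R M))

end

universe v w

section Cosets

variable {R : Type u} [CommRing R]

/-- `C` is a coset of the submodule `U`. -/
def IsCosetOf {V : Type v} [AddCommGroup V] [Module R V] (U : Submodule R V) (C : Set V) : Prop :=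
  ∃ a, C = {x | x - a ∈ U}

theorem IsCosetOf.rebase {V : Type v} [AddCommGroup V] [Module R V] {U : Submodule R V}
    {C : Set V} (h : IsCosetOf U C) {w : V} (hw : w ∈ C) : C = {x | x - w ∈ U} := by
  obtain ⟨a, rfl⟩ := h
  have hwa : w - a ∈ U := hw
  ext x
  constructor
  · intro hx
    have : (x - a) - (w - a) ∈ U := U.sub_mem hx hwa
    simpa [sub_sub_sub_cancel_right] using this
  · intro hx
    have : (x - w) + (w - a) ∈ U := U.add_mem hx hwa
    simpa [sub_add_sub_cancel] using this

theorem IsCosetOf.inter {V : Type v} [AddCommGroup V] [Module R V] {U U' : Submodule R V}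
    {C C' : Set V} (h : IsCosetOf U C) (h' : IsCosetOf U' C') {w : V} (hw : w ∈ C ∩ C') :
    IsCosetOf (U ⊓ U') (C ∩ C') := by
  refine ⟨w, ?_⟩
  rw [h.rebase hw.1, h'.rebase hw.2]
  ext x
  simp [Submodule.mem_inf, Set.mem_inter_iff]

theorem IsCosetOf.image {V : Type v} {V' : Type w} [AddCommGroup V] [Module R V]
    [AddCommGroup V'] [Module R V'] {U : Submodule R V} {C : Set V} (h : IsCosetOf U C)
    (f : V →ₗ[R] V') : IsCosetOf (U.map f) (f '' C) := by
  obtain ⟨a, rfl⟩ := h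
  refine ⟨f a, ?_⟩
  ext y
  constructor
  · rintro ⟨x, hx, rfl⟩
    exact ⟨x - a, hx, by simp [map_sub]⟩
  · rintro ⟨u, hu, huy⟩
    refine ⟨u + a, by simpa using hu, ?_⟩
    rw [map_add]
    rw [eq_comm, sub_eq_iff_eq_add] at huy
    exact huy.symm

theorem isCosetOf_preimage_singleton {V : Type v} {V' : Type w} [AddCommGroup V] [Module R V]
    [AddCommGroup V'] [Module R V'] (f : V →ₗ[R] V') {b : V'} {z₀ : V} (hz₀ : f z₀ = b) :
    IsCosetOf (LinearMap.ker f) {z | f z = b} := by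
  refine ⟨z₀, ?_⟩
  ext z
  simp only [Set.mem_setOf_eq, LinearMap.mem_ker, map_sub, hz₀, sub_eq_zero]

/-- Downward-directed families of nonempty cosets in an Artinian module have
nonempty intersection. -/
theorem iInter_nonempty_of_directed_cosets {W : Type u} [AddCommGroup W] [Module R W]
    [IsArtinian R W] {κ : Type v} [Nonempty κ] (V : κ → Set W) (U : κ → Submodule R W)
    (hcos : ∀ x, IsCosetOf (U x) (V x)) (hne : ∀ x, (V x).Nonempty)
    (hdir : ∀ x y, ∃ t, V t ⊆ V x ∩ V y) : (⋂ x, V x).Nonempty := by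
  have hUle : ∀ {x y : κ}, V x ⊆ V y → U x ≤ U y := by
    intro x y hsub u hu
    obtain ⟨w, hw⟩ := hne x
    have hw' : w + u ∈ V x := by
      rw [(hcos x).rebase hw]
      simpa using hu
    have h1 : w ∈ V y := hsub hw
    have h2 : w + u ∈ V y := hsub hw'
    rw [(hcos y).rebase h1] at h2
    simpa using h2
  obtain ⟨N, ⟨x₀, rfl⟩, hmin⟩ :=
    IsArtinian.set_has_minimal (Set.range U) ⟨U (Classical.arbitrary κ), Set.mem_range_self _⟩
  have key : ∀ x, V x₀ ⊆ V x := by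
    intro x
    obtain ⟨t, ht⟩ := hdir x x₀
    have h1 : V t ⊆ V x := ht.trans Set.inter_subset_left
    have h2 : V t ⊆ V x₀ := ht.trans Set.inter_subset_right
    have hUt : U t = U x₀ := by
      have hle : U t ≤ U x₀ := hUle h2
      by_contra hne'
      exact hmin (U t) (Set.mem_range_self t) (lt_of_le_of_ne hle hne')
    obtain ⟨w, hw⟩ := hne t
    have : V x₀ = V t := by
      rw [(hcos t).rebase hw, (hcos x₀).rebase (h2 hw), hUt]
    exact this ▸ h1
  obtain ⟨w, hw⟩ := hne x₀
  exact ⟨w, Set.mem_iInter.2 fun x => key x hw⟩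

end Cosets


section Compactness

variable {R : Type u} [CommRing R]

/-- A finitely solvable system of linear constraints with values in an Artinian module
is solvable. -/
theorem exists_solution_of_finitely_solvable {W J ι : Type u} [AddCommGroup W] [Module R W]
    [IsArtinian R W] (k m : ι → J) (a : ι → R) (b : ι → W)
    (hfin : ∀ Γ : Finset ι, ∃ z : J → W, ∀ i ∈ Γ, z (m i) = a i • z (k i) + b i) :
    ∃ z : J → W, ∀ i, z (m i) = a i • z (k i) + b i := by
  classical
  set Sat : (J → W) → ι → Prop := fun z i => z (m i) = a i • z (k i) + b i with hSat
  -- the constraint sets are cosets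
  set ψ : ι → ((J → W) →ₗ[R] W) :=
    fun i => LinearMap.proj (m i) - a i • LinearMap.proj (k i) with hψ
  have hψ_apply : ∀ i z, ψ i z = z (m i) - a i • z (k i) := by
    intro i z
    simp [hψ]
  have hSat_iff : ∀ z i, Sat z i ↔ ψ i z = b i := by
    intro z i
    rw [hψ_apply, sub_eq_iff_eq_add']
  have hSatSet : ∀ i, {z | Sat z i} = {z | ψ i z = b i} := by
    intro i; ext z; exact hSat_iff z i
  have hSatCoset : ∀ i, IsCosetOf (LinearMap.ker (ψ i)) {z | Sat z i} := by
    intro i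
    obtain ⟨z₀, hz₀⟩ := hfin {i}
    rw [hSatSet i]
    exact isCosetOf_preimage_singleton (ψ i) ((hSat_iff z₀ i).mp (hz₀ i (Finset.mem_singleton_self i)))
  -- functional graphs with finite consistency
  set Func : Set (J × W) → Prop :=
    fun G => ∀ ⦃j : J⦄ ⦃w w' : W⦄, (j, w) ∈ G → (j, w') ∈ G → w = w' with hFunc
  set Cons : Set (J × W) → Prop :=
    fun G => ∀ Γ : Finset ι, ∃ z : J → W, (∀ q ∈ G, z q.1 = q.2) ∧ ∀ i ∈ Γ, Sat z i with hCons
  set 𝒮 : Set (Set (J × W)) := {G | Func G ∧ Cons G} with h𝒮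
  have hempty : (∅ : Set (J × W)) ∈ 𝒮 := by
    constructor
    · intro j w w' h; exact absurd h (Set.notMem_empty _)
    · intro Γ
      obtain ⟨z, hz⟩ := hfin Γ
      exact ⟨z, fun q hq => absurd hq (Set.notMem_empty _), hz⟩
  -- chains have upper bounds
  have hchainub : ∀ c ⊆ 𝒮, IsChain (· ⊆ ·) c → c.Nonempty →
      ∃ ub ∈ 𝒮, ∀ s ∈ c, s ⊆ ub := by
    intro c hc𝒮 hchain hcne
    refine ⟨⋃₀ c, ⟨?_, ?_⟩, fun s hs => Set.subset_sUnion_of_mem hs⟩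
    · -- functional
      intro j w w' hw hw'
      obtain ⟨C, hC, hwC⟩ := hw
      obtain ⟨C', hC', hwC'⟩ := hw'
      rcases hchain.total hC hC' with h | h
      · exact (hc𝒮 hC').1 (h hwC) hwC'
      · exact (hc𝒮 hC).1 hwC (h hwC')
    · -- consistent
      intro Γ
      have hUF : Func (⋃₀ c) := by
        intro j w w' hw hw'
        obtain ⟨C, hC, hwC⟩ := hw
        obtain ⟨C', hC', hwC'⟩ := hw'
        rcases hchain.total hC hC' with h | h
        · exact (hc𝒮 hC').1 (h hwC) hwC'
        · exact (hc𝒮 hC).1 hwC (h hwC')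
      set val : J → W := fun j =>
        if h : ∃ w, (j, w) ∈ ⋃₀ c then h.choose else 0 with hval
      have hvalmem : ∀ j (h : ∃ w, (j, w) ∈ ⋃₀ c), (j, val j) ∈ ⋃₀ c := by
        intro j h
        rw [hval]; simp only [h, dif_pos]
        exact h.choose_spec
      have hvaleq : ∀ j w, (j, w) ∈ ⋃₀ c → val j = w := by
        intro j w hjw
        exact hUF (hvalmem j ⟨w, hjw⟩) hjw
      set F : Finset J := Γ.image m ∪ Γ.image k with hF
      -- find a chain member containing all relevant pairs
      have hmem : ∃ C ∈ c, ∀ j ∈ F, ∀ h : ∃ w, (j, w) ∈ ⋃₀ c, (j, val j) ∈ C := by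
        classical
        induction F using Finset.induction_on with
        | empty =>
            obtain ⟨C, hC⟩ := hcne
            exact ⟨C, hC, fun j hj => absurd hj (Finset.notMem_empty _)⟩
        | @insert j₁ F₁ hnotin ih =>
            obtain ⟨C₁, hC₁, hC₁p⟩ := ih
            by_cases hj₁ : ∃ w, (j₁, w) ∈ ⋃₀ c
            · obtain ⟨C₂, hC₂, hmem₂⟩ := hvalmem j₁ hj₁
              rcases hchain.total hC₁ hC₂ with h | h
              · refine ⟨C₂, hC₂, fun j hj hw => ?_⟩
                rcases Finset.mem_insert.mp hj with rfl | hj'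
                · exact hmem₂
                · exact h (hC₁p j hj' hw)
              · refine ⟨C₁, hC₁, fun j hj hw => ?_⟩
                rcases Finset.mem_insert.mp hj with rfl | hj'
                · exact h hmem₂
                · exact hC₁p j hj' hw
            · refine ⟨C₁, hC₁, fun j hj hw => ?_⟩
              rcases Finset.mem_insert.mp hj with rfl | hj'
              · exact absurd hw hj₁
              · exact hC₁p j hj' hw
      obtain ⟨C, hCc, hCp⟩ := hmem
      obtain ⟨zC, hzCG, hzCSat⟩ := (hc𝒮 hCc).2 Γ
      set z : J → W := fun j => if h : ∃ w, (j, w) ∈ ⋃₀ c then val j else zC j with hz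
      have hzF : ∀ j ∈ F, z j = zC j := by
        intro j hj
        rw [hz]
        by_cases h : ∃ w, (j, w) ∈ ⋃₀ c
        · simp only [h, dif_pos]
          exact (hzCG (j, val j) (hCp j hj h)).symm
        · simp only [h, dif_neg, not_false_iff]
      refine ⟨z, ?_, ?_⟩
      · intro q hq
        have h : ∃ w, (q.1, w) ∈ ⋃₀ c := ⟨q.2, hq⟩
        rw [hz]; simp only [h, dif_pos]
        exact hvaleq q.1 q.2 hq
      · intro i hi
        have hm : m i ∈ F := Finset.mem_union_left _ (Finset.mem_image_of_mem m hi)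
        have hk : k i ∈ F := Finset.mem_union_right _ (Finset.mem_image_of_mem k hi)
        have hthis : zC (m i) = a i • zC (k i) + b i := hzCSat i hi
        show z (m i) = a i • z (k i) + b i
        rw [hzF _ hm, hzF _ hk]
        exact hthis
  obtain ⟨G, -, hGmax⟩ := zorn_subset_nonempty 𝒮 hchainub ∅ hempty
  have hG𝒮 : G ∈ 𝒮 := hGmax.prop
  -- maximal graph is total
  have htot : ∀ j, ∃ w, (j, w) ∈ G := by
    by_contra hcon
    push_neg at hcon
    obtain ⟨j₀, hj₀⟩ := hcon
    -- graph set is a coset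
    set graphSet : Set (J → W) := {z | ∀ q ∈ G, z q.1 = q.2} with hgs
    set UG : Submodule R (J → W) := ⨅ q ∈ G, LinearMap.ker (LinearMap.proj q.1 : (J → W) →ₗ[R] W) with hUG
    have hUGmem : ∀ z, z ∈ UG ↔ ∀ q ∈ G, z q.1 = 0 := by
      intro z
      rw [hUG]
      simp [Submodule.mem_iInf]
    set zG : J → W := fun j => if h : ∃ w, (j, w) ∈ G then h.choose else 0 with hzG
    have hzGmem : ∀ j w, (j, w) ∈ G → zG j = w := by
      intro j w hjw
      rw [hzG]
      have h : ∃ w', (j, w') ∈ G := ⟨w, hjw⟩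
      simp only [h, dif_pos]
      exact hG𝒮.1 h.choose_spec hjw
    have hgsCoset : IsCosetOf UG graphSet := by
      refine ⟨zG, ?_⟩
      ext z
      simp only [hgs, Set.mem_setOf_eq, hUGmem]
      constructor
      · intro h q hq
        simp [Pi.sub_apply, h q hq, hzGmem q.1 q.2 hq]
      · intro h q hq
        have := h q hq
        rw [Pi.sub_apply, sub_eq_zero, hzGmem q.1 q.2 hq] at this
        exact this
    -- the Z and V families
    set Z : Finset ι → Set (J → W) := fun Γ => graphSet ∩ ⋂ i ∈ Γ, {z | Sat z i} with hZ
    have hZmem : ∀ Γ z, z ∈ Z Γ ↔ (∀ q ∈ G, z q.1 = q.2) ∧ ∀ i ∈ Γ, Sat z i := by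
      intro Γ z
      rw [hZ]
      simp [Set.mem_iInter, hgs]
    have hZne : ∀ Γ, (Z Γ).Nonempty := by
      intro Γ
      obtain ⟨z, hz1, hz2⟩ := hG𝒮.2 Γ
      exact ⟨z, (hZmem Γ z).mpr ⟨hz1, hz2⟩⟩
    have hZcoset : ∀ Γ, ∃ U : Submodule R (J → W), IsCosetOf U (Z Γ) := by
      intro Γ
      induction Γ using Finset.induction_on with
      | empty =>
          refine ⟨UG, ?_⟩
          have : Z ∅ = graphSet := by
            rw [hZ]; simp
          rw [this]; exact hgsCoset
      | @insert i₁ Γ₁ hnotin ih =>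
          obtain ⟨U₁, hU₁⟩ := ih
          have hstep : Z (insert i₁ Γ₁) = Z Γ₁ ∩ {z | Sat z i₁} := by
            rw [hZ]
            simp only [Finset.set_biInter_insert]
            ext z
            simp only [Set.mem_inter_iff, Set.mem_setOf_eq]
            tauto
          obtain ⟨w, hw⟩ := hZne (insert i₁ Γ₁)
          rw [hstep] at hw ⊢
          exact ⟨_, hU₁.inter (hSatCoset i₁) hw⟩
    set Vf : Finset ι → Set W := fun Γ => (LinearMap.proj j₀ : (J → W) →ₗ[R] W) '' Z Γ with hVf
    have hVcoset : ∀ Γ, ∃ U : Submodule R W, IsCosetOf U (Vf Γ) := by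
      intro Γ
      obtain ⟨U, hU⟩ := hZcoset Γ
      exact ⟨_, hU.image _⟩
    choose Uf hUf using hVcoset
    have hVne : ∀ Γ, (Vf Γ).Nonempty := fun Γ => (hZne Γ).image _
    have hVdir : ∀ Γ₁ Γ₂, ∃ Γ₃, Vf Γ₃ ⊆ Vf Γ₁ ∩ Vf Γ₂ := by
      intro Γ₁ Γ₂
      refine ⟨Γ₁ ∪ Γ₂, ?_⟩
      have hsub : ∀ (Δ : Finset ι), Δ ⊆ Γ₁ ∪ Γ₂ → Z (Γ₁ ∪ Γ₂) ⊆ Z Δ := by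
        intro Δ hΔ z hz
        rw [hZmem] at hz ⊢
        exact ⟨hz.1, fun i hi => hz.2 i (hΔ hi)⟩
      exact Set.subset_inter
        (Set.image_mono (hsub Γ₁ Finset.subset_union_left))
        (Set.image_mono (hsub Γ₂ Finset.subset_union_right))
    obtain ⟨w, hw⟩ := iInter_nonempty_of_directed_cosets Vf Uf hUf hVne hVdir
    rw [Set.mem_iInter] at hw
    -- extend the graph
    have hG' : insert (j₀, w) G ∈ 𝒮 := by
      constructor
      · intro j w₁ w₂ h1 h2
        rcases h1 with h1 | h1 <;> rcases h2 with h2 | h2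
        · injection h1 with e1 e2
          injection h2 with e3 e4
          rw [e2, e4]
        · injection h1 with e1 e2
          subst e1
          exact absurd h2 (hj₀ w₂)
        · injection h2 with e1 e2
          subst e1
          exact absurd h1 (hj₀ w₁)
        · exact hG𝒮.1 h1 h2
      · intro Γ
        obtain ⟨z, hzZ, hzj₀⟩ := hw Γ
        rw [hZmem] at hzZ
        refine ⟨z, ?_, hzZ.2⟩
        intro q hq
        rcases hq with rfl | hq
        · exact hzj₀
        · exact hzZ.1 q hq
    have : insert (j₀, w) G ⊆ G := hGmax.2 hG' (Set.subset_insert _ _)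
    exact hj₀ w (this (Set.mem_insert _ _))
  -- conclude
  set z : J → W := fun j => (htot j).choose with hzdef
  refine ⟨z, fun i => ?_⟩
  obtain ⟨z', hz'G, hz'Sat⟩ := hG𝒮.2 {i}
  have hzz' : ∀ j, z' j = z j := by
    intro j
    exact hz'G (j, z j) (htot j).choose_spec
  have hthis : z' (m i) = a i • z' (k i) + b i := hz'Sat i (Finset.mem_singleton_self i)
  show z (m i) = a i • z (k i) + b i
  rw [← hzz', ← hzz']
  exact hthis

end Compactness


section KeyLemma

variable {R : Type u} [CommRing R]

/-- Key lemma: if `M` is an Artinian module whose annihilator is contained in the prime `p`,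
then there is a nonzero `R`-linear map `R_p → M`. -/
theorem exists_hom_localization_ne_zero {M : Type u} [AddCommGroup M] [Module R M]
    [IsArtinian R M] (p : Ideal R) [p.IsPrime]
    (hann : (⊤ : Submodule R M).annihilator ≤ p) :
    ∃ f : Localization.AtPrime p →ₗ[R] M, f ≠ 0 := by
  classical
  set S : Submonoid R := p.primeCompl with hS
  -- minimal "image" submodule
  set D : S → Submodule R M := fun s => Submodule.map (LinearMap.lsmul R M (s : R)) ⊤ with hD
  obtain ⟨N, ⟨c, hc⟩, hmin⟩ :=
    IsArtinian.set_has_minimal (Set.range D) ⟨D 1, Set.mem_range_self _⟩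
  -- divisibility of N
  have hdiv : ∀ t : S, Submodule.map (LinearMap.lsmul R M (t : R)) N = N := by
    intro t
    have hcomp : Submodule.map (LinearMap.lsmul R M (t : R)) N = D (t * c) := by
      rw [← hc, hD]
      simp only
      rw [← Submodule.map_comp]
      congr 1
      ext x
      simp only [LinearMap.coe_comp, Function.comp_apply, LinearMap.lsmul_apply,
        Submonoid.coe_mul, mul_smul]
    have hle : D (t * c) ≤ N := by
      rw [← hc]
      rintro x ⟨y, -, rfl⟩
      refine ⟨(t : R) • y, trivial, ?_⟩
      simp only [LinearMap.lsmul_apply, Submonoid.coe_mul]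
      rw [smul_smul, mul_comm]
    have heq : D (t * c) = N := by
      by_contra hne
      exact hmin (D (t * c)) (Set.mem_range_self _) (lt_of_le_of_ne hle hne)
    rw [hcomp, heq]
  have hNne : N ≠ ⊥ := by
    intro hbot
    have hcmem : (c : R) ∈ (⊤ : Submodule R M).annihilator := by
      rw [Submodule.mem_annihilator]
      intro n _
      have : (c : R) • n ∈ D c := ⟨n, trivial, rfl⟩
      rw [hc, hbot] at this
      simpa using this
    exact c.2 (hann hcmem)
  -- work inside W := N
  obtain ⟨n₀M, hn₀M, hn₀ne⟩ := (Submodule.ne_bot_iff N).mp hNne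
  set W := ↥N
  set n₀ : W := ⟨n₀M, hn₀M⟩ with hn₀
  have hn₀0 : n₀ ≠ 0 := by
    intro h
    exact hn₀ne (congrArg Subtype.val h)
  have hdivW : ∀ (t : S) (y : W), ∃ x : W, (t : R) • x = y := by
    intro t y
    have hy : (y : M) ∈ Submodule.map (LinearMap.lsmul R M (t : R)) N := by
      rw [hdiv t]; exact y.2
    obtain ⟨x, hx, hxy⟩ := hy
    refine ⟨⟨x, hx⟩, Subtype.ext ?_⟩
    rw [SetLike.val_smul]
    exact hxy
  have htors : ∀ (r : R) (s : S), (s : R) * r = 0 → ∀ ξ : W, r • ξ = 0 := by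
    intro r s hrs ξ
    obtain ⟨ξ', hξ'⟩ := hdivW s ξ
    rw [← hξ', smul_smul, mul_comm, hrs, zero_smul]
  -- set up the constraint system
  set J := ↥S
  set ι := Option (J × J)
  set km : ι → J := fun i => Option.elim i 1 (fun q => q.1 * q.2) with hkm
  set mm : ι → J := fun i => Option.elim i 1 (fun q => q.1) with hmm
  set am : ι → R := fun i => Option.elim i 0 (fun q => (q.2 : R)) with ham
  set bm : ι → W := fun i => Option.elim i n₀ (fun _ => 0) with hbm
  have hfin : ∀ Γ : Finset ι, ∃ z : J → W, ∀ i ∈ Γ,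
      z (mm i) = am i • z (km i) + bm i := by
    intro Γ
    set Γ' : Finset (J × J) := Finset.eraseNone Γ with hΓ'
    set u : J := ∏ q ∈ Γ', (q.1 * q.2) with hu
    obtain ⟨ξ, hξ⟩ := hdivW u n₀
    set z : J → W := fun v => if h : ∃ w : J, v * w = u then ((h.choose : J) : R) • ξ else 0
      with hz
    have hzval : ∀ (v w : J), v * w = u → z v = (w : R) • ξ := by
      intro v w hvw
      have h : ∃ w' : J, v * w' = u := ⟨w, hvw⟩
      rw [hz]
      simp only [h, dif_pos]
      have hch : v * h.choose = u := h.choose_spec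
      have hv0 : (v : R) * ((h.choose : R) - (w : R)) = 0 := by
        have e1 : ((v * h.choose : J) : R) = ((v * w : J) : R) := by rw [hch, hvw]
        rw [mul_sub, ← Submonoid.coe_mul, ← Submonoid.coe_mul, e1, sub_self]
      have := htors _ v hv0 ξ
      rw [sub_smul] at this
      have := sub_eq_zero.mp this
      exact this
    refine ⟨z, ?_⟩
    intro i hi
    match i with
    | none =>
        simp only [hkm, hmm, ham, hbm, Option.elim]
        have h1 : z 1 = (u : R) • ξ := hzval 1 u (one_mul u)
        rw [h1, hξ, zero_smul, zero_add]
    | some (s, t) =>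
        have hmem : (s, t) ∈ Γ' := by
          rw [hΓ', Finset.mem_eraseNone]
          exact hi
        simp only [hkm, hmm, ham, hbm, Option.elim]
        have hprod : (s * t) * ∏ q ∈ Γ'.erase (s, t), (q.1 * q.2) = u := by
          rw [hu]
          exact Finset.mul_prod_erase Γ' (fun q => q.1 * q.2) hmem
        set rest : J := ∏ q ∈ Γ'.erase (s, t), (q.1 * q.2) with hrest
        have h1 : z (s * t) = (rest : R) • ξ := hzval (s * t) rest hprod
        have h2 : z s = ((t * rest : J) : R) • ξ := by
          apply hzval
          rw [← mul_assoc]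
          exact hprod
        rw [h1, h2, add_zero, smul_smul, Submonoid.coe_mul]
  obtain ⟨z, hsol⟩ := exists_solution_of_finitely_solvable km mm am bm hfin
  have hz1 : z 1 = n₀ := by
    have := hsol none
    simpa [hkm, hmm, ham, hbm, Option.elim] using this
  have hth : ∀ s t : J, z s = (t : R) • z (s * t) := by
    intro s t
    have := hsol (some (s, t))
    simpa [hkm, hmm, ham, hbm, Option.elim] using this
  -- build the linear map
  have wd : ∀ {r₁ r₂ : R} {s₁ s₂ : ↥S},
      Localization.r S (r₁, s₁) (r₂, s₂) → r₁ • z s₁ = r₂ • z s₂ := by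
    intro r₁ r₂ s₁ s₂ hrel
    rw [Localization.r_iff_exists] at hrel
    obtain ⟨e, he⟩ := hrel
    -- he : ↑e * (↑s₂ * r₁) = ↑e * (↑s₁ * r₂)
    have h1 : r₁ • z s₁ = (r₁ * ((e : R) * (s₂ : R))) • z (s₁ * (e * s₂)) := by
      rw [hth s₁ (e * s₂), smul_smul, Submonoid.coe_mul]
    have h2 : r₂ • z s₂ = (r₂ * ((e : R) * (s₁ : R))) • z (s₂ * (e * s₁)) := by
      rw [hth s₂ (e * s₁), smul_smul, Submonoid.coe_mul]
    rw [h1, h2]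
    have hcoord : s₁ * (e * s₂) = s₂ * (e * s₁) := by
      apply Subtype.ext
      simp [Submonoid.coe_mul]
      ring
    have hcoef : r₁ * ((e : R) * (s₂ : R)) = r₂ * ((e : R) * (s₁ : R)) := by
      linear_combination he
    rw [hcoord, hcoef]
  set g₀ : Localization S → W := fun x => Localization.liftOn x (fun r s => r • z s) wd
    with hg₀
  have hg₀mk : ∀ (r : R) (s : ↥S), g₀ (Localization.mk r s) = r • z s := by
    intro r s
    rw [hg₀]
    exact Localization.liftOn_mk _ _ _ _
  have hadd : ∀ x y, g₀ (x + y) = g₀ x + g₀ y := by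
    intro x y
    induction x using Localization.induction_on with
    | _ x₁ =>
      induction y using Localization.induction_on with
      | _ y₁ =>
        obtain ⟨r₁, s₁⟩ := x₁
        obtain ⟨r₂, s₂⟩ := y₁
        rw [Localization.add_mk, hg₀mk, hg₀mk, hg₀mk]
        rw [hth s₁ s₂, hth s₂ s₁, smul_smul, smul_smul]
        rw [mul_comm s₂ s₁]
        rw [← add_smul]
        congr 1
        ring
  have hsmul : ∀ (r : R) x, g₀ (r • x) = r • g₀ x := by
    intro r x
    induction x using Localization.induction_on with
    | _ x₁ =>
      obtain ⟨r₁, s₁⟩ := x₁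
      rw [Localization.smul_mk, hg₀mk, hg₀mk, smul_eq_mul, mul_smul]
  set g : Localization S →ₗ[R] W :=
    { toFun := g₀, map_add' := hadd, map_smul' := hsmul } with hg
  refine ⟨N.subtype.comp g, ?_⟩
  intro hzero
  have h1 : Localization.mk (1 : R) (1 : ↥S) = (1 : Localization S) := by
    have := Localization.mk_self (M := R) (S := S) (1 : ↥S)
    simpa using this
  have h2 : (N.subtype.comp g) (Localization.mk (1 : R) (1 : ↥S)) = 0 := by
    rw [hzero]; rfl
  rw [LinearMap.comp_apply] at h2
  have h3 : g (Localization.mk (1 : R) (1 : ↥S)) = (1 : R) • z 1 := hg₀mk 1 1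
  rw [h3, one_smul, hz1] at h2
  exact hn₀ne h2

end KeyLemma


section Easy

variable {R : Type u} [CommRing R]

theorem comp_ne_zero_of_ne_zero {A B C : Type u} [AddCommGroup A] [Module R A]
    [AddCommGroup B] [Module R B] [AddCommGroup C] [Module R C]
    (u : B →ₗ[R] C) (hu : Function.Injective u) (f : A →ₗ[R] B) (hf : f ≠ 0) :
    u.comp f ≠ 0 := by
  intro h
  apply hf
  ext x
  have h1 : u (f x) = 0 := by
    rw [← LinearMap.comp_apply, h]; rfl
  have h2 : u (f x) = u 0 := by rw [h1, map_zero]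
  simpa using hu h2

theorem annihilator_top_subtype {M : Type u} [AddCommGroup M] [Module R M]
    (N : Submodule R M) :
    (⊤ : Submodule R ↥N).annihilator = N.annihilator := by
  ext r
  rw [Submodule.mem_annihilator, Submodule.mem_annihilator]
  constructor
  · intro h x hx
    have := h ⟨x, hx⟩ trivial
    have h2 := congrArg Subtype.val this
    simpa using h2
  · intro h n _
    apply Subtype.ext
    rw [SetLike.val_smul]
    simpa using h n.1 n.2

theorem annihilator_le_of_mem_cosupport {N : Type u} [AddCommGroup N] [Module R N]
    {p : PrimeSpectrum R} (h : p ∈ cosupport R N) :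
    (⊤ : Submodule R N).annihilator ≤ p.asIdeal := by
  obtain ⟨f, hf⟩ := h
  intro r hr
  by_contra hrp
  apply hf
  ext x
  have hu : IsUnit (algebraMap R (Localization.AtPrime p.asIdeal) r) :=
    IsLocalization.map_units _ (⟨r, hrp⟩ : p.asIdeal.primeCompl)
  obtain ⟨v, hv⟩ := hu.exists_right_inv
  have hx : x = r • (v * x) := by
    rw [Algebra.smul_def, ← mul_assoc, hv, one_mul]
  rw [hx, map_smul]
  have : ∀ n : N, r • n = 0 := fun n => Submodule.mem_annihilator.mp hr n trivial
  rw [this]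
  rfl

end Easy



/-- For a commutative ring `R` and an Artinian `R`-module `M`:
`Ann_R(0 :_M p) = p` for every prime `p ⊇ Ann_R M` iff
`Cos_R(0 :_M I) = Cos_R M ∩ V(I)` for every ideal `I`. -/
theorem statement7 (R : Type u) [CommRing R]
    (M : Type u) [AddCommGroup M] [Module R M] [IsArtinian R M] :
    (∀ p : Ideal R, p.IsPrime → (⊤ : Submodule R M).annihilator ≤ p →
        (Submodule.torsionBySet R M (p : Set R)).annihilator = p) ↔
      (∀ I : Ideal R,
        cosupport R (Submodule.torsionBySet R M (I : Set R)) =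
          cosupport R M ∩ PrimeSpectrum.zeroLocus (I : Set R)) := by
  constructor
  · intro hyp I
    ext p
    simp only [Set.mem_inter_iff]
    constructor
    · intro hp
      have hIann : I ≤ (Submodule.torsionBySet R M (I : Set R)).annihilator := by
        intro r hr
        rw [Submodule.mem_annihilator]
        intro m hm
        exact (Submodule.mem_torsionBySet_iff (I : Set R) m).mp hm ⟨r, hr⟩
      have h1 := annihilator_le_of_mem_cosupport hp
      rw [annihilator_top_subtype] at h1
      refine ⟨?_, ?_⟩
      · obtain ⟨f, hf⟩ := hp
        exact ⟨(Submodule.torsionBySet R M (I : Set R)).subtype.comp f,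
          comp_ne_zero_of_ne_zero _ (Submodule.injective_subtype _) f hf⟩
      · rw [PrimeSpectrum.mem_zeroLocus]
        exact fun x hx => (hIann.trans h1) hx
    · rintro ⟨hpM, hpI⟩
      have h1 : (⊤ : Submodule R M).annihilator ≤ p.asIdeal :=
        annihilator_le_of_mem_cosupport hpM
      have h2 := hyp p.asIdeal p.isPrime h1
      have h3 : (⊤ : Submodule R ↥(Submodule.torsionBySet R M (p.asIdeal : Set R))).annihilator
          ≤ p.asIdeal := by
        rw [annihilator_top_subtype, h2]
      obtain ⟨f, hf⟩ := exists_hom_localization_ne_zero p.asIdeal h3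
      have hle : Submodule.torsionBySet R M (p.asIdeal : Set R) ≤
          Submodule.torsionBySet R M (I : Set R) :=
        Submodule.torsionBySet_le_torsionBySet_of_subset
          ((PrimeSpectrum.mem_zeroLocus _ _).mp hpI)
      exact ⟨(Submodule.inclusion hle).comp f,
        comp_ne_zero_of_ne_zero _ (Submodule.inclusion_injective hle) f hf⟩
  · intro hyp q hq hqle
    haveI := hq
    apply le_antisymm
    · obtain ⟨f, hf⟩ := exists_hom_localization_ne_zero (M := M) q hqle
      set p : PrimeSpectrum R := ⟨q, hq⟩ with hpdef
      have hpM : p ∈ cosupport R M := ⟨f, hf⟩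
      have hpV : p ∈ PrimeSpectrum.zeroLocus (q : Set R) := by
        rw [PrimeSpectrum.mem_zeroLocus]
      have hmem : p ∈ cosupport R (Submodule.torsionBySet R M (q : Set R)) := by
        rw [hyp q]
        exact ⟨hpM, hpV⟩
      have h1 := annihilator_le_of_mem_cosupport hmem
      rw [annihilator_top_subtype] at h1
      exact h1
    · intro r hr
      rw [Submodule.mem_annihilator]
      intro m hm
      exact (Submodule.mem_torsionBySet_iff (q : Set R) m).mp hm ⟨r, hr⟩
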